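/- In GL(2, Z/4Z), let U_1 be the subgroup generated by [[1,2],[0,3]] and [[1,1],[0,3]], and let U_2 be the subgroup generated by [[1,0],[2,3]] and [[1,0],[1,3]]. Then U_1 and U_2 are not conjugate in GL(2, Z/4Z): there is no g in GL(2, Z/4Z) with gU_1g^{-1} = U_2. -/

import Mathlib

/-- `GL(2, ZMod 4)`, the group of invertible 2×2 matrices over `ZMod 4`. -/
abbrev GL2 : Type := Matrix.GeneralLinearGroup (Fin 2) (ZMod 4)

/-- `a = [[3,2],[3,3]]` as an element of `GL(2, ZMod 4)`. -/
def a : GL2 := ⟨!![3, 2; 3, 3], !![1, 2; 3, 1], by decide, by decide⟩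

/-- `b = [[1,3],[2,3]]` as an element of `GL(2, ZMod 4)`. -/
def b : GL2 := ⟨!![1, 3; 2, 3], !![3, 1; 2, 1], by decide, by decide⟩

/-- `c = [[3,3],[1,2]]` as an element of `GL(2, ZMod 4)`. -/
def c : GL2 := ⟨!![3, 3; 1, 2], !![2, 3; 1, 1], by decide, by decide⟩

/-- `U₁` is the subgroup of `GL(2, ZMod 4)` generated by `[[1,2],[0,3]]` and `[[1,1],[0,3]]`. -/
def U1 : Subgroup GL2 :=
  Subgroup.closure {(⟨!![1, 2; 0, 3], !![1, 2; 0, 3], by decide, by decide⟩ : GL2),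
                    (⟨!![1, 1; 0, 3], !![1, 1; 0, 3], by decide, by decide⟩ : GL2)}

/-- `U₂` is the subgroup of `GL(2, ZMod 4)` generated by `[[1,0],[2,3]]` and `[[1,0],[1,3]]`. -/
def U2 : Subgroup GL2 :=
  Subgroup.closure {(⟨!![1, 0; 2, 3], !![1, 0; 2, 3], by decide, by decide⟩ : GL2),
                    (⟨!![1, 0; 1, 3], !![1, 0; 1, 3], by decide, by decide⟩ : GL2)}

set_option maxRecDepth 40000

abbrev M2 : Type := Matrix (Fin 2) (Fin 2) (ZMod 4)

def mk' (m mi : M2) (h1 : m * mi = 1) (h2 : mi * m = 1) : GL2 := ⟨m, mi, h1, h2⟩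

def gA : GL2 := mk' !![1,2;0,3] !![1,2;0,3] (by decide) (by decide)
def gB : GL2 := mk' !![1,1;0,3] !![1,1;0,3] (by decide) (by decide)
def gC : GL2 := mk' !![1,0;2,3] !![1,0;2,3] (by decide) (by decide)
def gD : GL2 := mk' !![1,0;1,3] !![1,0;1,3] (by decide) (by decide)

def L1 : List GL2 :=
  [1,
   mk' !![1,1;0,1] !![1,3;0,1] (by decide) (by decide),
   mk' !![1,2;0,1] !![1,2;0,1] (by decide) (by decide),
   mk' !![1,3;0,1] !![1,1;0,1] (by decide) (by decide),
   mk' !![1,0;0,3] !![1,0;0,3] (by decide) (by decide),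
   gB, gA,
   mk' !![1,3;0,3] !![1,3;0,3] (by decide) (by decide)]

def L2 : List GL2 :=
  [1,
   mk' !![1,0;1,1] !![1,0;3,1] (by decide) (by decide),
   mk' !![1,0;2,1] !![1,0;2,1] (by decide) (by decide),
   mk' !![1,0;3,1] !![1,0;1,1] (by decide) (by decide),
   mk' !![1,0;0,3] !![1,0;0,3] (by decide) (by decide),
   gD, gC,
   mk' !![1,0;3,3] !![1,0;3,3] (by decide) (by decide)]

def L1m : List M2 :=
  [1, !![1,1;0,1], !![1,2;0,1], !![1,3;0,1], !![1,0;0,3], !![1,1;0,3], !![1,2;0,3], !![1,3;0,3]]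

def L2m : List M2 :=
  [1, !![1,0;1,1], !![1,0;2,1], !![1,0;3,1], !![1,0;0,3], !![1,0;1,3], !![1,0;2,3], !![1,0;3,3]]

attribute [-instance] Fintype.decidableForallFintype Fintype.decidableExistsFintype in
lemma L1mul : ∀ x ∈ L1, ∀ y ∈ L1, x * y ∈ L1 := by decide

attribute [-instance] Fintype.decidableForallFintype Fintype.decidableExistsFintype in
lemma L1inv : ∀ x ∈ L1, x⁻¹ ∈ L1 := by decide

attribute [-instance] Fintype.decidableForallFintype Fintype.decidableExistsFintype in
lemma L2mul : ∀ x ∈ L2, ∀ y ∈ L2, x * y ∈ L2 := by decide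

attribute [-instance] Fintype.decidableForallFintype Fintype.decidableExistsFintype in
lemma L2inv : ∀ x ∈ L2, x⁻¹ ∈ L2 := by decide

attribute [-instance] Fintype.decidableForallFintype Fintype.decidableExistsFintype in
lemma L1val : ∀ x ∈ L1, (x : M2) ∈ L1m := by decide

attribute [-instance] Fintype.decidableForallFintype Fintype.decidableExistsFintype in
lemma L2val : ∀ x ∈ L2, (x : M2) ∈ L2m := by decide

def H1 : Subgroup GL2 where
  carrier := {x | x ∈ L1}
  one_mem' := List.mem_cons_self
  mul_mem' := fun {x y} hx hy => L1mul x hx y hy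
  inv_mem' := fun {x} hx => L1inv x hx

def H2 : Subgroup GL2 where
  carrier := {x | x ∈ L2}
  one_mem' := List.mem_cons_self
  mul_mem' := fun {x y} hx hy => L2mul x hx y hy
  inv_mem' := fun {x} hx => L2inv x hx

lemma hU1 : U1 = H1 := by
  apply le_antisymm
  · rw [U1, Subgroup.closure_le]
    rintro x (rfl | rfl) <;> · show _ ∈ L1; decide
  · intro x hx
    have hA : gA ∈ U1 := Subgroup.subset_closure (Set.mem_insert _ _)
    have hB : gB ∈ U1 := Subgroup.subset_closure (Set.mem_insert_of_mem _ rfl)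
    have hx' : x ∈ L1 := hx
    simp only [L1, List.mem_cons, List.not_mem_nil, or_false] at hx'
    rcases hx' with rfl|rfl|rfl|rfl|rfl|rfl|rfl|rfl
    · exact one_mem _
    · rw [show mk' !![1,1;0,1] !![1,3;0,1] (by decide) (by decide) = gB * gA from by decide]
      exact mul_mem hB hA
    · rw [show mk' !![1,2;0,1] !![1,2;0,1] (by decide) (by decide) = gB * gA * gB * gA from by decide]
      exact mul_mem (mul_mem (mul_mem hB hA) hB) hA
    · rw [show mk' !![1,3;0,1] !![1,1;0,1] (by decide) (by decide) = gA * gB from by decide]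
      exact mul_mem hA hB
    · rw [show mk' !![1,0;0,3] !![1,0;0,3] (by decide) (by decide) = gB * gA * gB from by decide]
      exact mul_mem (mul_mem hB hA) hB
    · exact hB
    · exact hA
    · rw [show mk' !![1,3;0,3] !![1,3;0,3] (by decide) (by decide) = gA * gB * gA from by decide]
      exact mul_mem (mul_mem hA hB) hA

lemma hU2 : U2 = H2 := by
  apply le_antisymm
  · rw [U2, Subgroup.closure_le]
    rintro x (rfl | rfl) <;> · show _ ∈ L2; decide
  · intro x hx
    have hC : gC ∈ U2 := Subgroup.subset_closure (Set.mem_insert _ _)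
    have hD : gD ∈ U2 := Subgroup.subset_closure (Set.mem_insert_of_mem _ rfl)
    have hx' : x ∈ L2 := hx
    simp only [L2, List.mem_cons, List.not_mem_nil, or_false] at hx'
    rcases hx' with rfl|rfl|rfl|rfl|rfl|rfl|rfl|rfl
    · exact one_mem _
    · rw [show mk' !![1,0;1,1] !![1,0;3,1] (by decide) (by decide) = gC * gD from by decide]
      exact mul_mem hC hD
    · rw [show mk' !![1,0;2,1] !![1,0;2,1] (by decide) (by decide) = gC * gD * gC * gD from by decide]
      exact mul_mem (mul_mem (mul_mem hC hD) hC) hD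
    · rw [show mk' !![1,0;3,1] !![1,0;1,1] (by decide) (by decide) = gD * gC from by decide]
      exact mul_mem hD hC
    · rw [show mk' !![1,0;0,3] !![1,0;0,3] (by decide) (by decide) = gD * gC * gD from by decide]
      exact mul_mem (mul_mem hD hC) hD
    · exact hD
    · exact hC
    · rw [show mk' !![1,0;3,3] !![1,0;3,3] (by decide) (by decide) = gC * gD * gC from by decide]
      exact mul_mem (mul_mem hC hD) hC

/-- Boolean membership in a list of matrices. -/
def melem (x : M2) : List M2 → Bool
  | [] => false
  | y :: l => decide (x = y) || melem x l

lemma melem_iff (x : M2) : ∀ l : List M2, melem x l = true ↔ x ∈ l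
  | [] => by simp [melem]
  | y :: l => by
    simp [melem, melem_iff x l, List.mem_cons, Bool.or_eq_true, decide_eq_true_iff]

/-- The boolean conjugation condition, at the matrix level. -/
def condB (v w : M2) : Bool :=
  (L1.all fun u => melem (v * (u : M2) * w) L2m) &&
  (L2.all fun u => melem (w * (u : M2) * v) L1m)

/-- An explicit inverse formula for 2×2 matrices over `ZMod 4` with unit determinant. -/
def invM (v : M2) : M2 := v.det • !![v 1 1, -(v 0 1); -(v 1 0), v 0 0]

set_option maxHeartbeats 4000000 in
lemma invM_spec : ∀ v : M2, v.det * v.det = 1 → v * invM v = 1 ∧ invM v * v = 1 := by decide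

set_option maxHeartbeats 4000000 in
lemma key : ∀ v : M2, v.det * v.det = 1 → condB v (invM v) = false := by decide

lemma zmod4_unit_sq : ∀ x y : ZMod 4, x * y = 1 → x * x = 1 := by decide

/-- `U₁` and `U₂` are not conjugate in `GL(2, ZMod 4)`: no `g` satisfies `g U₁ g⁻¹ = U₂`. -/
theorem stmt_17 :
    ¬ ∃ g : GL2, {x | ∃ u ∈ U1, g * u * g⁻¹ = x} = (U2 : Set GL2) := by
  rintro ⟨g, h⟩
  -- determinant of g.val squares to one
  have hdet : (g : M2).det * (g : M2).det = 1 := by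
    apply zmod4_unit_sq _ ((g⁻¹ : GL2) : M2).det
    rw [← Matrix.det_mul]
    have : (g : M2) * ((g⁻¹ : GL2) : M2) = 1 := g.val_inv
    rw [this, Matrix.det_one]
  -- g⁻¹.val coincides with the explicit inverse formula
  have hinv : ((g⁻¹ : GL2) : M2) = invM (g : M2) := by
    obtain ⟨h1, h2⟩ := invM_spec (g : M2) hdet
    calc ((g⁻¹ : GL2) : M2) = ((g⁻¹ : GL2) : M2) * ((g : M2) * invM (g : M2)) := by
          rw [h1, mul_one]
      _ = (((g⁻¹ : GL2) : M2) * (g : M2)) * invM (g : M2) := by rw [mul_assoc]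
      _ = invM (g : M2) := by rw [← Units.val_mul, inv_mul_cancel, Units.val_one, one_mul]
  -- derive the boolean condition from the set equality
  have hfwd : ∀ u ∈ L1, g * u * g⁻¹ ∈ L2 := by
    intro u hu
    have hu1 : u ∈ U1 := by rw [hU1]; exact hu
    have hmem : g * u * g⁻¹ ∈ {x | ∃ u ∈ U1, g * u * g⁻¹ = x} := ⟨u, hu1, rfl⟩
    rw [h] at hmem
    have : g * u * g⁻¹ ∈ H2 := by rw [← hU2]; exact hmem
    exact this
  have hbwd : ∀ v ∈ L2, g⁻¹ * v * g ∈ L1 := by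
    intro v hv
    have hv2 : v ∈ (U2 : Set GL2) := by
      rw [hU2]; exact (hv : v ∈ H2)
    rw [← h] at hv2
    obtain ⟨u, hu, heq⟩ := hv2
    have hval : g⁻¹ * v * g = u := by rw [← heq]; group
    rw [hval]
    have : u ∈ H1 := by rw [← hU1]; exact hu
    exact this
  have hcond : condB (g : M2) (invM (g : M2)) = true := by
    rw [condB, Bool.and_eq_true, List.all_eq_true, List.all_eq_true]
    constructor
    · intro u hu
      rw [melem_iff]
      have := L2val _ (hfwd u hu)
      rw [← hinv]
      exact this
    · intro v hv
      rw [melem_iff]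
      have := L1val _ (hbwd v hv)
      rw [← hinv]
      exact this
  rw [key (g : M2) hdet] at hcond
  exact Bool.false_ne_true hcond
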